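/- Let v ∈ ℝ^{n+2} be a unit vector with J v = λ v, and let a = v(0)|0,R⟩ + Σ_{j=1}^{n} v(j)(√q|j,L⟩ + √p|j,R⟩) + v(n+1)|n+1,L⟩ and b = S a. (i) If λ = 1 or λ = −1, then U a = λ a, i.e., a is an eigenvector of U with eigenvalue λ. (ii) If −1 < λ < 1 and φ ∈ (0,π) satisfies cos φ = λ, then for each sign choice, U(a − e^{±iφ} b) = e^{±iφ}(a − e^{±iφ} b) and ‖a − e^{±iφ} b‖² = 2(1 − λ²); i.e., a − e^{±iφ} b are eigenvectors of U with eigenvalues e^{±iφ}. -/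

import Mathlib

open Filter Finset

/- Index convention for the Hilbert space `H_n` of dimension `2n+2`:
index `0` is `|0,R⟩`, index `2j-1` is `|j,L⟩` and `2j` is `|j,R⟩` for `1 ≤ j ≤ n`,
and index `2n+1` is `|n+1,L⟩`. -/

/-- Entries of the coin operator `C`. Column `l` is the image of the `l`-th basis vector. -/
noncomputable def coinEntry (p q : ℝ) (n k l : ℕ) : ℝ :=
  if l = 0 ∨ l = 2 * n + 1 then (if k = l then 1 else 0)
  else if l % 2 = 1 then
    (if k = l then 2 * q - 1 else if k = l + 1 then 2 * Real.sqrt (p * q) else 0)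
  else
    (if k = l then 2 * p - 1 else if k + 1 = l then 2 * Real.sqrt (p * q) else 0)

noncomputable def coinM (p q : ℝ) (n : ℕ) : Matrix (Fin (2 * n + 2)) (Fin (2 * n + 2)) ℂ :=
  fun k l => ((coinEntry p q n k.1 l.1 : ℝ) : ℂ)

/-- The shift operator: `S|j,R⟩ = |j+1,L⟩`, `S|j,L⟩ = |j-1,R⟩`; in our indexing,
`S e_l = e_{l+1}` for even `l` and `S e_l = e_{l-1}` for odd `l`. -/
def shiftM (n : ℕ) : Matrix (Fin (2 * n + 2)) (Fin (2 * n + 2)) ℂ :=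
  fun k l => if l.1 % 2 = 0 then (if k.1 = l.1 + 1 then 1 else 0)
             else (if k.1 + 1 = l.1 then 1 else 0)

/-- The walk operator `U = S C`. -/
noncomputable def walkM (p q : ℝ) (n : ℕ) : Matrix (Fin (2 * n + 2)) (Fin (2 * n + 2)) ℂ :=
  shiftM n * coinM p q n

/-- The `(n+2) × (n+2)` Jacobi matrix of the reflected random walk on the path:
zero diagonal, `J(0,1) = √q`, `J(i,i+1) = √(pq)` for `1 ≤ i ≤ n-1`, `J(n,n+1) = √p`,
and symmetric. -/
noncomputable def jacobiM (p q : ℝ) (n : ℕ) : Matrix (Fin (n + 2)) (Fin (n + 2)) ℝ :=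
  fun k l =>
    if k.1 + 1 = l.1 then
      (if k.1 = 0 then Real.sqrt q else if k.1 = n then Real.sqrt p else Real.sqrt (p * q))
    else if l.1 + 1 = k.1 then
      (if l.1 = 0 then Real.sqrt q else if l.1 = n then Real.sqrt p else Real.sqrt (p * q))
    else 0

/-- The lift `a ∈ H_n` of a vector `v ∈ ℝ^{n+2}`:
`a = v(0)|0,R⟩ + ∑_{j=1}^{n} v(j)(√q|j,L⟩ + √p|j,R⟩) + v(n+1)|n+1,L⟩`. -/
noncomputable def liftVec (p q : ℝ) (n : ℕ) (v : Fin (n + 2) → ℝ) : Fin (2 * n + 2) → ℂ :=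
  fun k =>
    if k.1 = 0 then ((v 0 : ℝ) : ℂ)
    else if k.1 = 2 * n + 1 then ((v (Fin.last (n + 1)) : ℝ) : ℂ)
    else (((if k.1 % 2 = 1 then Real.sqrt q else Real.sqrt p) *
      v ⟨(k.1 + 1) / 2, by have := k.isLt; omega⟩ : ℝ) : ℂ)


/-! ### Auxiliary machinery -/

/-- Safe index into `Fin (n+2)`. -/
def fidx (n m : ℕ) : Fin (n + 2) := ⟨min m (n + 1), by omega⟩

lemma fidx_eq (n m : ℕ) (h : m < n + 2) : fidx n m = ⟨m, h⟩ := by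
  simp only [fidx]; ext; simp; omega

/-- Real version of `liftVec`, defined on all of `ℕ`. -/
noncomputable def aRN (p q : ℝ) (n : ℕ) (v : Fin (n + 2) → ℝ) : ℕ → ℝ := fun k =>
  if k = 0 then v (fidx n 0)
  else if k = 2 * n + 1 then v (fidx n (n + 1))
  else (if k % 2 = 1 then Real.sqrt q else Real.sqrt p) * v (fidx n ((k + 1) / 2))

lemma liftVec_eq (p q : ℝ) (n : ℕ) (v : Fin (n + 2) → ℝ) (k : Fin (2 * n + 2)) :
    liftVec p q n v k = ((aRN p q n v k.1 : ℝ) : ℂ) := by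
  have hk := k.isLt
  simp only [liftVec, aRN]
  split_ifs with h1 h2 h3
  · rw [fidx_eq n 0 (by omega)]; rfl
  · rw [fidx_eq n (n+1) (by omega)]; rfl
  · rw [fidx_eq n ((k.1+1)/2) (by omega)]
  · rw [fidx_eq n ((k.1+1)/2) (by omega)]

/-- The pair-swap on indices. -/
def sigN (k : ℕ) : ℕ := if k % 2 = 0 then k + 1 else k - 1

lemma sigN_lt (n : ℕ) (k : ℕ) (hk : k < 2 * n + 2) : sigN k < 2 * n + 2 := by
  unfold sigN; split <;> omega

lemma shift_mulVec (n : ℕ) (x : Fin (2 * n + 2) → ℂ) (k : Fin (2 * n + 2)) :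
    (shiftM n).mulVec x k = x ⟨sigN k.1, sigN_lt n k.1 k.isLt⟩ := by
  have hk := k.isLt
  simp only [Matrix.mulVec, dotProduct]
  rw [Finset.sum_eq_single (⟨sigN k.1, sigN_lt n k.1 k.isLt⟩ : Fin (2*n+2))]
  · have hc : shiftM n k (⟨sigN k.1, sigN_lt n k.1 k.isLt⟩ : Fin (2*n+2)) = 1 := by
      show (if (sigN k.1) % 2 = 0 then (if k.1 = sigN k.1 + 1 then (1:ℂ) else 0)
            else if k.1 + 1 = sigN k.1 then 1 else 0) = 1
      unfold sigN
      by_cases h : k.1 % 2 = 0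
      · rw [if_pos h, if_neg (by omega), if_pos (by omega)]
      · rw [if_neg h, if_pos (by omega), if_pos (by omega)]
    rw [hc, one_mul]
  · intro l _ hl
    have hne : l.1 ≠ sigN k.1 := fun hc => hl (Fin.eq_of_val_eq hc)
    have h0 : shiftM n k l = 0 := by
      show (if l.1 % 2 = 0 then (if k.1 = l.1 + 1 then (1:ℂ) else 0)
            else if k.1 + 1 = l.1 then (1:ℂ) else 0) = 0
      unfold sigN at hne
      split_ifs at hne ⊢ <;> first | rfl | (exfalso; omega)
    rw [h0, zero_mul]
  · intro h; exact absurd (Finset.mem_univ _) h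


/-- Diagonal coefficient of the coin in row `k`. -/
noncomputable def Ac (p q : ℝ) (n k : ℕ) : ℝ :=
  if k = 0 ∨ k = 2 * n + 1 then 1 else if k % 2 = 1 then 2 * q - 1 else 2 * p - 1

lemma coin_mulVec (p q : ℝ) (n : ℕ) (x : Fin (2 * n + 2) → ℂ) (k : Fin (2 * n + 2)) :
    (coinM p q n).mulVec x k =
      ((Ac p q n k.1 : ℝ) : ℂ) * x k
      + (if k.1 % 2 = 0 ∧ k.1 ≠ 0 then
          ((2 * Real.sqrt (p * q) : ℝ) : ℂ) * x ⟨k.1 - 1, by have := k.isLt; omega⟩ else 0)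
      + (if h : k.1 % 2 = 1 ∧ k.1 ≠ 2 * n + 1 then
          ((2 * Real.sqrt (p * q) : ℝ) : ℂ) * x ⟨k.1 + 1, by have := k.isLt; omega⟩ else 0) := by
  have hk := k.isLt
  have key : ∀ l : Fin (2 * n + 2), coinM p q n k l * x l =
      (if l = k then ((Ac p q n k.1 : ℝ) : ℂ) * x l else 0)
      + (if (k.1 % 2 = 0 ∧ k.1 ≠ 0) ∧ l.1 + 1 = k.1 then
          ((2 * Real.sqrt (p * q) : ℝ) : ℂ) * x l else 0)
      + (if (k.1 % 2 = 1 ∧ k.1 ≠ 2 * n + 1) ∧ l.1 = k.1 + 1 then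
          ((2 * Real.sqrt (p * q) : ℝ) : ℂ) * x l else 0) := by
    intro l
    have hl := l.isLt
    simp only [coinM, coinEntry, Ac, Fin.ext_iff]
    split_ifs <;> first | (push_cast; ring1) | (exfalso; omega)
  simp only [Matrix.mulVec, dotProduct]
  rw [Finset.sum_congr rfl (fun l _ => key l), Finset.sum_add_distrib,
    Finset.sum_add_distrib]
  congr 1
  · congr 1
    · rw [Finset.sum_eq_single k]
      · rw [if_pos rfl]
      · intro l _ hl; exact if_neg hl
      · intro h; exact absurd (Finset.mem_univ _) h
    · by_cases hC : k.1 % 2 = 0 ∧ k.1 ≠ 0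
      · rw [if_pos hC,
          Finset.sum_eq_single (⟨k.1 - 1, by omega⟩ : Fin (2 * n + 2))]
        · rw [if_pos ⟨hC, by simp; omega⟩]
        · intro l _ hl
          rw [if_neg]
          rintro ⟨-, h2⟩
          exact hl (Fin.eq_of_val_eq (by simp; omega))
        · intro h; exact absurd (Finset.mem_univ _) h
      · rw [if_neg hC]
        exact Finset.sum_eq_zero fun l _ => if_neg (by tauto)
  · by_cases hC : k.1 % 2 = 1 ∧ k.1 ≠ 2 * n + 1
    · rw [dif_pos hC,
        Finset.sum_eq_single (⟨k.1 + 1, by omega⟩ : Fin (2 * n + 2))]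
      · rw [if_pos ⟨hC, by simp⟩]
      · intro l _ hl
        rw [if_neg]
        rintro ⟨-, h2⟩
        exact hl (Fin.eq_of_val_eq (by simp; omega))
      · intro h; exact absurd (Finset.mem_univ _) h
    · rw [dif_neg hC]
      exact Finset.sum_eq_zero fun l _ => if_neg (by tauto)


/-- Off-diagonal coefficients of the Jacobi matrix: `Dc i = J(i, i+1)`. -/
noncomputable def Dc (p q : ℝ) (n i : ℕ) : ℝ :=
  if i = 0 then Real.sqrt q else if i = n then Real.sqrt p else Real.sqrt (p * q)

lemma jacobi_row (p q lam : ℝ) (n : ℕ) (v : Fin (n + 2) → ℝ)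
    (heig : (jacobiM p q n).mulVec v = lam • v) (j : ℕ) (hj : j < n + 2) :
    (if j = 0 then 0 else Dc p q n (j - 1) * v (fidx n (j - 1)))
      + (if j ≤ n then Dc p q n j * v (fidx n (j + 1)) else 0)
    = lam * v (fidx n j) := by
  have h0 := congrFun heig ⟨j, hj⟩
  simp only [Matrix.mulVec, dotProduct, Pi.smul_apply, smul_eq_mul] at h0
  rw [fidx_eq n j hj, ← h0]
  have key : ∀ l : Fin (n + 2), jacobiM p q n ⟨j, hj⟩ l * v l =
      (if l.1 + 1 = j then Dc p q n (j - 1) * v l else 0)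
      + (if l.1 = j + 1 then Dc p q n j * v l else 0) := by
    intro l
    have hl := l.isLt
    simp only [jacobiM, Dc]
    split_ifs <;> first | ring1 | (exfalso; omega)
  rw [Finset.sum_congr rfl (fun l _ => key l), Finset.sum_add_distrib]
  congr 1
  · by_cases h0j : j = 0
    · rw [if_pos h0j]
      symm; apply Finset.sum_eq_zero; intro l _; rw [if_neg (by omega)]
    · rw [if_neg h0j, fidx_eq n (j - 1) (by omega)]
      symm
      rw [Finset.sum_eq_single (⟨j - 1, by omega⟩ : Fin (n + 2))]
      · rw [if_pos (by simp; omega)]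
      · intro l _ hl
        rw [if_neg]
        intro h2
        exact hl (Fin.eq_of_val_eq (by simp; omega))
      · intro h; exact absurd (Finset.mem_univ _) h
  · by_cases hjn : j ≤ n
    · rw [if_pos hjn, fidx_eq n (j + 1) (by omega)]
      symm
      rw [Finset.sum_eq_single (⟨j + 1, by omega⟩ : Fin (n + 2))]
      · rw [if_pos (by simp)]
      · intro l _ hl
        rw [if_neg]
        intro h2
        exact hl (Fin.eq_of_val_eq (by simp; omega))
      · intro h; exact absurd (Finset.mem_univ _) h
    · rw [if_neg hjn]
      symm; apply Finset.sum_eq_zero; intro l _; rw [if_neg (by omega)]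

lemma sum_range_two_mul (f : ℕ → ℝ) (m : ℕ) :
    ∑ k ∈ Finset.range (2 * m), f k = ∑ j ∈ Finset.range m, (f (2 * j) + f (2 * j + 1)) := by
  induction m with
  | zero => simp
  | succ m ih =>
      have h : 2 * (m + 1) = (2 * m + 1) + 1 := by ring
      rw [h, Finset.sum_range_succ, Finset.sum_range_succ, ih, Finset.sum_range_succ]
      ring

lemma sigN_even (j : ℕ) : sigN (2 * j) = 2 * j + 1 := by
  unfold sigN; rw [if_pos (by omega)]

lemma sigN_odd (j : ℕ) : sigN (2 * j + 1) = 2 * j := by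
  unfold sigN; rw [if_neg (by omega)]; omega

lemma sigN_sigN (k : ℕ) : sigN (sigN k) = k := by
  unfold sigN; split_ifs <;> omega

lemma aRN_two_mul (p q : ℝ) (n : ℕ) (v : Fin (n + 2) → ℝ) (j : ℕ) (hj : j ≤ n) :
    aRN p q n v (2 * j) = if j = 0 then v (fidx n 0) else Real.sqrt p * v (fidx n j) := by
  by_cases h0 : j = 0
  · subst h0; simp [aRN]
  · rw [if_neg h0]
    unfold aRN
    rw [if_neg (by omega), if_neg (by omega), if_neg (by omega),
      show (2 * j + 1) / 2 = j from by omega]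

lemma aRN_two_mul_add_one (p q : ℝ) (n : ℕ) (v : Fin (n + 2) → ℝ) (j : ℕ) (hj : j ≤ n) :
    aRN p q n v (2 * j + 1)
      = if j = n then v (fidx n (n + 1)) else Real.sqrt q * v (fidx n (j + 1)) := by
  by_cases h0 : j = n
  · subst h0; unfold aRN; rw [if_neg (by omega), if_pos rfl, if_pos rfl]
  · rw [if_neg h0]
    unfold aRN
    rw [if_neg (by omega), if_neg (by omega), if_pos (by omega),
      show (2 * j + 1 + 1) / 2 = j + 1 from by omega]


lemma sum_aRN_sq (p q : ℝ) (hp0 : 0 ≤ p) (hq0 : 0 ≤ q) (hpq : p + q = 1)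
    (n : ℕ) (hn : 1 ≤ n) (v : Fin (n + 2) → ℝ) :
    ∑ k ∈ Finset.range (2 * n + 2), (aRN p q n v k) ^ 2
      = ∑ j ∈ Finset.range (n + 2), (v (fidx n j)) ^ 2 := by
  rw [show 2 * n + 2 = 2 * (n + 1) from by ring, sum_range_two_mul]
  have e2 : ∀ j ∈ Finset.range (n + 1),
      (aRN p q n v (2 * j)) ^ 2 + (aRN p q n v (2 * j + 1)) ^ 2
      = ((if j = 0 then (v (fidx n 0)) ^ 2 else p * (v (fidx n j)) ^ 2)
        + (if j = n then (v (fidx n (n + 1))) ^ 2 else q * (v (fidx n (j + 1))) ^ 2)) := by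
    intro j hj
    rw [Finset.mem_range] at hj
    rw [aRN_two_mul p q n v j (by omega), aRN_two_mul_add_one p q n v j (by omega)]
    split_ifs <;>
      first
        | (exfalso; omega)
        | (simp only [mul_pow, Real.sq_sqrt hq0, Real.sq_sqrt hp0])
  rw [Finset.sum_congr rfl e2, Finset.sum_add_distrib]
  have e3 : ∑ j ∈ Finset.range (n + 1),
      (if j = 0 then (v (fidx n 0)) ^ 2 else p * (v (fidx n j)) ^ 2)
      = (v (fidx n 0)) ^ 2 + p * ∑ j ∈ Finset.range n, (v (fidx n (j + 1))) ^ 2 := by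
    have eshift : ∀ x ∈ Finset.range n,
        (if x + 1 = 0 then (v (fidx n 0)) ^ 2 else p * (v (fidx n (x + 1))) ^ 2)
        = p * (v (fidx n (x + 1))) ^ 2 := fun x _ => if_neg (by omega)
    rw [Finset.sum_range_succ', Finset.sum_congr rfl eshift, if_pos rfl, Finset.mul_sum]
    ring
  have e4 : ∑ j ∈ Finset.range (n + 1),
      (if j = n then (v (fidx n (n + 1))) ^ 2 else q * (v (fidx n (j + 1))) ^ 2)
      = (v (fidx n (n + 1))) ^ 2 + q * ∑ j ∈ Finset.range n, (v (fidx n (j + 1))) ^ 2 := by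
    rw [Finset.sum_range_succ, if_pos rfl,
      Finset.sum_congr rfl (fun j hj => if_neg (by rw [Finset.mem_range] at hj; omega)),
      Finset.mul_sum]
    ring
  have e5 : ∑ j ∈ Finset.range (n + 2), (v (fidx n j)) ^ 2
      = (v (fidx n 0)) ^ 2 + (∑ j ∈ Finset.range n, (v (fidx n (j + 1))) ^ 2)
        + (v (fidx n (n + 1))) ^ 2 := by
    rw [Finset.sum_range_succ, Finset.sum_range_succ']
    ring
  rw [e3, e4, e5]
  linear_combination (∑ j ∈ Finset.range n, (v (fidx n (j + 1))) ^ 2) * hpq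

lemma pair_prod (p q : ℝ) (hp0 : 0 ≤ p) (n : ℕ) (hn : 1 ≤ n) (v : Fin (n + 2) → ℝ)
    (j : ℕ) (hj : j ≤ n) :
    aRN p q n v (2 * j) * aRN p q n v (2 * j + 1)
      = Dc p q n j * (v (fidx n j) * v (fidx n (j + 1))) := by
  rw [aRN_two_mul p q n v j hj, aRN_two_mul_add_one p q n v j hj]
  by_cases h1 : j = 0
  · subst h1
    rw [if_pos rfl, if_neg (by omega), show Dc p q n 0 = Real.sqrt q from if_pos rfl]
    ring
  · by_cases h2 : j = n
    · subst h2
      rw [if_neg h1, if_pos rfl]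
      unfold Dc
      rw [if_neg h1, if_pos rfl]
      ring
    · rw [if_neg h1, if_neg h2,
        show Dc p q n j = Real.sqrt (p * q) from by unfold Dc; rw [if_neg h1, if_neg h2],
        Real.sqrt_mul hp0]
      ring

lemma quad_eq_lam (p q lam : ℝ) (n : ℕ) (v : Fin (n + 2) → ℝ)
    (hv : ∑ j ∈ Finset.range (n + 2), (v (fidx n j)) ^ 2 = 1)
    (heig : (jacobiM p q n).mulVec v = lam • v) :
    2 * ∑ j ∈ Finset.range (n + 1), Dc p q n j * (v (fidx n j) * v (fidx n (j + 1))) = lam := by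
  have key : ∀ j ∈ Finset.range (n + 2),
      v (fidx n j) * ((if j = 0 then 0 else Dc p q n (j - 1) * v (fidx n (j - 1)))
        + (if j ≤ n then Dc p q n j * v (fidx n (j + 1)) else 0))
      = lam * (v (fidx n j)) ^ 2 := by
    intro j hj
    rw [jacobi_row p q lam n v heig j (Finset.mem_range.mp hj)]
    ring
  have hsplit : ∀ j ∈ Finset.range (n + 2),
      v (fidx n j) * ((if j = 0 then 0 else Dc p q n (j - 1) * v (fidx n (j - 1)))
        + (if j ≤ n then Dc p q n j * v (fidx n (j + 1)) else 0))
      = (if j = 0 then 0 else Dc p q n (j - 1) * (v (fidx n (j - 1)) * v (fidx n j)))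
        + (if j ≤ n then Dc p q n j * (v (fidx n j) * v (fidx n (j + 1))) else 0) := by
    intro j _
    split_ifs <;> ring
  have h1 : ∑ j ∈ Finset.range (n + 2), lam * (v (fidx n j)) ^ 2 = lam := by
    rw [← Finset.mul_sum, hv, mul_one]
  have h2 := Finset.sum_congr rfl hsplit
  rw [Finset.sum_congr rfl key, h1] at h2
  rw [Finset.sum_add_distrib] at h2
  have e1 : ∑ j ∈ Finset.range (n + 2),
      (if j = 0 then (0:ℝ) else Dc p q n (j - 1) * (v (fidx n (j - 1)) * v (fidx n j)))
      = ∑ j ∈ Finset.range (n + 1), Dc p q n j * (v (fidx n j) * v (fidx n (j + 1))) := by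
    have eshift : ∀ x ∈ Finset.range (n + 1),
        (if x + 1 = 0 then (0:ℝ)
          else Dc p q n (x + 1 - 1) * (v (fidx n (x + 1 - 1)) * v (fidx n (x + 1))))
        = Dc p q n x * (v (fidx n x) * v (fidx n (x + 1))) := by
      intro x _; rw [if_neg (by omega)]; norm_num
    rw [Finset.sum_range_succ', Finset.sum_congr rfl eshift, if_pos rfl, add_zero]
  have e2 : ∑ j ∈ Finset.range (n + 2),
      (if j ≤ n then Dc p q n j * (v (fidx n j) * v (fidx n (j + 1))) else (0:ℝ))
      = ∑ j ∈ Finset.range (n + 1), Dc p q n j * (v (fidx n j) * v (fidx n (j + 1))) := by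
    rw [Finset.sum_range_succ, if_neg (by omega), add_zero]
    exact Finset.sum_congr rfl (fun j hj => if_pos (by rw [Finset.mem_range] at hj; omega))
  rw [e1, e2] at h2
  linarith [h2]


/-- The coin fixes the lift `a` (real, componentwise form). -/
lemma coin_aRN (p q : ℝ) (hp0 : 0 < p) (hq0 : 0 < q) (hpq : p + q = 1)
    (n : ℕ) (hn : 1 ≤ n) (v : Fin (n + 2) → ℝ) (k : ℕ) (hk : k < 2 * n + 2) :
    Ac p q n k * aRN p q n v k
    + (if k % 2 = 0 ∧ k ≠ 0 then 2 * Real.sqrt (p * q) * aRN p q n v (k - 1) else 0)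
    + (if k % 2 = 1 ∧ k ≠ 2 * n + 1 then 2 * Real.sqrt (p * q) * aRN p q n v (k + 1) else 0)
    = aRN p q n v k := by
  have hsp : Real.sqrt p * Real.sqrt p = p := Real.mul_self_sqrt hp0.le
  have hsq : Real.sqrt q * Real.sqrt q = q := Real.mul_self_sqrt hq0.le
  have hspq : Real.sqrt (p * q) = Real.sqrt p * Real.sqrt q := Real.sqrt_mul hp0.le q
  by_cases h0 : k = 0
  · subst h0
    rw [if_neg (by omega), if_neg (by omega)]
    rw [show Ac p q n 0 = 1 from if_pos (Or.inl rfl)]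
    ring
  by_cases hL : k = 2 * n + 1
  · subst hL
    rw [if_neg (by omega), if_neg (by omega)]
    rw [show Ac p q n (2 * n + 1) = 1 from if_pos (Or.inr rfl)]
    ring
  by_cases hpar : k % 2 = 1
  · obtain ⟨j, hjn, rfl⟩ : ∃ j, j < n ∧ k = 2 * j + 1 := ⟨k / 2, by omega, by omega⟩
    rw [if_neg (by omega), if_pos (⟨hpar, hL⟩ : _ ∧ _)]
    rw [aRN_two_mul_add_one p q n v j (by omega), if_neg (by omega)]
    rw [show 2 * j + 1 + 1 = 2 * (j + 1) from by ring,
      aRN_two_mul p q n v (j + 1) (by omega), if_neg (by omega)]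
    rw [show Ac p q n (2 * j + 1) = 2 * q - 1 from by
      unfold Ac; rw [if_neg (by omega), if_pos (by omega)]]
    linear_combination (2 * Real.sqrt q * v (fidx n (j + 1))) * hsp
      + (2 * Real.sqrt q * v (fidx n (j + 1))) * hpq
      + (2 * Real.sqrt p * v (fidx n (j + 1))) * hspq
  · obtain ⟨j, hj1, hjn, rfl⟩ : ∃ j, 1 ≤ j ∧ j ≤ n ∧ k = 2 * j :=
      ⟨k / 2, by omega, by omega, by omega⟩
    rw [if_pos (⟨by omega, h0⟩ : _ ∧ _), if_neg (by omega)]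
    rw [aRN_two_mul p q n v j hjn, if_neg (by omega)]
    rw [show 2 * j - 1 = 2 * (j - 1) + 1 from by omega,
      aRN_two_mul_add_one p q n v (j - 1) (by omega), if_neg (by omega),
      show j - 1 + 1 = j from by omega]
    rw [show Ac p q n (2 * j) = 2 * p - 1 from by
      unfold Ac; rw [if_neg (by omega), if_neg (by omega)]]
    linear_combination (2 * Real.sqrt p * v (fidx n j)) * hpq
      + (2 * Real.sqrt p * v (fidx n j)) * hsq
      + (2 * Real.sqrt q * v (fidx n j)) * hspq

/-- The coin reflects `b = Sa` into `2·λ·a - b` (real, componentwise form). -/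
lemma coin_bRN (p q lam : ℝ) (hp0 : 0 < p) (hq0 : 0 < q) (hpq : p + q = 1)
    (n : ℕ) (hn : 1 ≤ n) (v : Fin (n + 2) → ℝ)
    (heig : (jacobiM p q n).mulVec v = lam • v) (k : ℕ) (hk : k < 2 * n + 2) :
    Ac p q n k * aRN p q n v (sigN k)
    + (if k % 2 = 0 ∧ k ≠ 0 then 2 * Real.sqrt (p * q) * aRN p q n v (sigN (k - 1)) else 0)
    + (if k % 2 = 1 ∧ k ≠ 2 * n + 1 then 2 * Real.sqrt (p * q) * aRN p q n v (sigN (k + 1)) else 0)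
    = 2 * lam * aRN p q n v k - aRN p q n v (sigN k) := by
  have hsp : Real.sqrt p * Real.sqrt p = p := Real.mul_self_sqrt hp0.le
  have hsq : Real.sqrt q * Real.sqrt q = q := Real.mul_self_sqrt hq0.le
  have hspq : Real.sqrt (p * q) = Real.sqrt p * Real.sqrt q := Real.sqrt_mul hp0.le q
  by_cases h0 : k = 0
  · subst h0
    rw [if_neg (by omega), if_neg (by omega)]
    rw [show Ac p q n 0 = 1 from if_pos (Or.inl rfl)]
    rw [show sigN 0 = 2 * 0 + 1 from by unfold sigN; norm_num,
      aRN_two_mul_add_one p q n v 0 (by omega), if_neg (by omega)]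
    rw [show aRN p q n v 0 = v (fidx n 0) from by unfold aRN; rw [if_pos rfl]]
    have row := jacobi_row p q lam n v heig 0 (by omega)
    rw [if_pos rfl, if_pos (by omega), zero_add,
      show Dc p q n 0 = Real.sqrt q from if_pos rfl] at row
    rw [show (0:ℕ) + 1 = 1 from rfl] at row
    linear_combination 2 * row
  by_cases hL : k = 2 * n + 1
  · subst hL
    rw [if_neg (by omega), if_neg (by omega)]
    rw [show Ac p q n (2 * n + 1) = 1 from if_pos (Or.inr rfl)]
    rw [show sigN (2 * n + 1) = 2 * n from sigN_odd n,
      aRN_two_mul p q n v n (le_refl n), if_neg (by omega)]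
    rw [show aRN p q n v (2 * n + 1) = v (fidx n (n + 1)) from by
      unfold aRN; rw [if_neg (by omega), if_pos rfl]]
    have row := jacobi_row p q lam n v heig (n + 1) (by omega)
    rw [if_neg (by omega), if_neg (by omega), add_zero,
      show n + 1 - 1 = n from by omega,
      show Dc p q n n = Real.sqrt p from by unfold Dc; rw [if_neg (by omega), if_pos rfl]] at row
    linear_combination 2 * row
  by_cases hpar : k % 2 = 1
  · -- odd middle: k = 2j+1, j < n; site index j+1
    obtain ⟨j, hjn, rfl⟩ : ∃ j, j < n ∧ k = 2 * j + 1 := ⟨k / 2, by omega, by omega⟩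
    rw [if_neg (by omega), if_pos (⟨hpar, hL⟩ : _ ∧ _)]
    rw [show Ac p q n (2 * j + 1) = 2 * q - 1 from by
      unfold Ac; rw [if_neg (by omega), if_pos (by omega)]]
    rw [sigN_odd j, show 2 * j + 1 + 1 = 2 * (j + 1) from by ring, sigN_even (j + 1)]
    rw [aRN_two_mul_add_one p q n v j (by omega), if_neg (by omega)]
    have row := jacobi_row p q lam n v heig (j + 1) (by omega)
    rw [if_neg (by omega), if_pos (by omega), show j + 1 - 1 = j from by omega] at row
    have h1 : 2 * q * aRN p q n v (2 * j)
        = 2 * Real.sqrt q * (Dc p q n j * v (fidx n j)) := by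
      rw [aRN_two_mul p q n v j (by omega)]
      by_cases hj0 : j = 0
      · subst hj0
        rw [if_pos rfl, show Dc p q n 0 = Real.sqrt q from if_pos rfl]
        linear_combination (-2 * v (fidx n 0)) * hsq
      · rw [if_neg hj0,
          show Dc p q n j = Real.sqrt (p * q) from by
            unfold Dc; rw [if_neg hj0, if_neg (by omega)]]
        linear_combination (-2 * Real.sqrt p * v (fidx n j)) * hsq
          + (-2 * Real.sqrt q * v (fidx n j)) * hspq
    have h2 : 2 * Real.sqrt (p * q) * aRN p q n v (2 * (j + 1) + 1)
        = 2 * Real.sqrt q * (Dc p q n (j + 1) * v (fidx n (j + 1 + 1))) := by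
      rw [aRN_two_mul_add_one p q n v (j + 1) (by omega)]
      by_cases hj1 : j + 1 = n
      · rw [if_pos hj1,
          show Dc p q n (j + 1) = Real.sqrt p from by unfold Dc; rw [if_neg (by omega), if_pos hj1],
          show fidx n (j + 1 + 1) = fidx n (n + 1) from by rw [show j + 1 + 1 = n + 1 from by omega]]
        linear_combination (2 * v (fidx n (n + 1))) * hspq
      · rw [if_neg hj1,
          show Dc p q n (j + 1) = Real.sqrt (p * q) from by
            unfold Dc; rw [if_neg (by omega), if_neg hj1]]
        ring
    linear_combination h1 + h2 + 2 * Real.sqrt q * row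
  · -- even middle: k = 2j, 1 ≤ j ≤ n; site index j
    obtain ⟨j, hj1, hjn, rfl⟩ : ∃ j, 1 ≤ j ∧ j ≤ n ∧ k = 2 * j :=
      ⟨k / 2, by omega, by omega, by omega⟩
    rw [if_pos (⟨by omega, h0⟩ : _ ∧ _), if_neg (by omega)]
    rw [show Ac p q n (2 * j) = 2 * p - 1 from by
      unfold Ac; rw [if_neg (by omega), if_neg (by omega)]]
    rw [sigN_even j, show 2 * j - 1 = 2 * (j - 1) + 1 from by omega, sigN_odd (j - 1)]
    rw [aRN_two_mul p q n v j hjn, if_neg (by omega)]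
    have row := jacobi_row p q lam n v heig j (by omega)
    rw [if_neg (by omega), if_pos hjn] at row
    have h1 : 2 * Real.sqrt (p * q) * aRN p q n v (2 * (j - 1))
        = 2 * Real.sqrt p * (Dc p q n (j - 1) * v (fidx n (j - 1))) := by
      rw [aRN_two_mul p q n v (j - 1) (by omega)]
      by_cases hj0 : j - 1 = 0
      · rw [if_pos hj0, show Dc p q n (j - 1) = Real.sqrt q from by rw [hj0]; exact if_pos rfl,
          show fidx n (j - 1) = fidx n 0 from by rw [hj0]]
        linear_combination (2 * v (fidx n 0)) * hspq
      · rw [if_neg hj0,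
          show Dc p q n (j - 1) = Real.sqrt (p * q) from by
            unfold Dc; rw [if_neg hj0, if_neg (by omega)]]
        ring
    have h2 : 2 * p * aRN p q n v (2 * j + 1)
        = 2 * Real.sqrt p * (Dc p q n j * v (fidx n (j + 1))) := by
      rw [aRN_two_mul_add_one p q n v j hjn]
      by_cases hj2 : j = n
      · rw [if_pos hj2,
          show Dc p q n j = Real.sqrt p from by unfold Dc; rw [if_neg (by omega), if_pos hj2],
          show fidx n (j + 1) = fidx n (n + 1) from by rw [hj2]]
        linear_combination (-2 * v (fidx n (n + 1))) * hsp
      · rw [if_neg hj2,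
          show Dc p q n j = Real.sqrt (p * q) from by
            unfold Dc; rw [if_neg (by omega), if_neg hj2]]
        linear_combination (-2 * Real.sqrt q * v (fidx n (j + 1))) * hsp
          + (-2 * Real.sqrt p * v (fidx n (j + 1))) * hspq
    linear_combination h1 + h2 + 2 * Real.sqrt p * row


lemma shift_lift_apply (p q : ℝ) (n : ℕ) (v : Fin (n + 2) → ℝ) (k : Fin (2 * n + 2)) :
    (shiftM n).mulVec (liftVec p q n v) k = ((aRN p q n v (sigN k.1) : ℝ) : ℂ) := by
  rw [shift_mulVec]
  exact liftVec_eq p q n v _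

lemma coin_fix_vec (p q : ℝ) (hp0 : 0 < p) (hq0 : 0 < q) (hpq : p + q = 1)
    (n : ℕ) (hn : 1 ≤ n) (v : Fin (n + 2) → ℝ) :
    (coinM p q n).mulVec (liftVec p q n v) = liftVec p q n v := by
  funext k
  rw [coin_mulVec]
  simp only [liftVec_eq]
  have key := coin_aRN p q hp0 hq0 hpq n hn v k.1 k.isLt
  by_cases h1 : k.1 % 2 = 0 ∧ k.1 ≠ 0 <;> by_cases h2 : k.1 % 2 = 1 ∧ k.1 ≠ 2 * n + 1
  · exfalso; omega
  · rw [if_pos h1, dif_neg h2]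
    rw [if_pos h1, if_neg h2] at key
    exact_mod_cast key
  · rw [if_neg h1, dif_pos h2]
    rw [if_neg h1, if_pos h2] at key
    exact_mod_cast key
  · rw [if_neg h1, dif_neg h2]
    rw [if_neg h1, if_neg h2] at key
    exact_mod_cast key

lemma coin_shift_vec (p q lam : ℝ) (hp0 : 0 < p) (hq0 : 0 < q) (hpq : p + q = 1)
    (n : ℕ) (hn : 1 ≤ n) (v : Fin (n + 2) → ℝ)
    (heig : (jacobiM p q n).mulVec v = lam • v) :
    (coinM p q n).mulVec ((shiftM n).mulVec (liftVec p q n v))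
      = ((2 * lam : ℝ) : ℂ) • liftVec p q n v - (shiftM n).mulVec (liftVec p q n v) := by
  funext k
  rw [coin_mulVec]
  simp only [shift_lift_apply, Pi.sub_apply, Pi.smul_apply, smul_eq_mul, liftVec_eq]
  have key := coin_bRN p q lam hp0 hq0 hpq n hn v heig k.1 k.isLt
  by_cases h1 : k.1 % 2 = 0 ∧ k.1 ≠ 0 <;> by_cases h2 : k.1 % 2 = 1 ∧ k.1 ≠ 2 * n + 1
  · exfalso; omega
  · rw [if_pos h1, dif_neg h2]
    rw [if_pos h1, if_neg h2] at key
    have key2 := congrArg (fun t : ℝ => (t : ℂ)) key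
    push_cast at key2
    push_cast
    linear_combination key2
  · rw [if_neg h1, dif_pos h2]
    rw [if_neg h1, if_pos h2] at key
    have key2 := congrArg (fun t : ℝ => (t : ℂ)) key
    push_cast at key2
    push_cast
    linear_combination key2
  · rw [if_neg h1, dif_neg h2]
    rw [if_neg h1, if_neg h2] at key
    have key2 := congrArg (fun t : ℝ => (t : ℂ)) key
    push_cast at key2
    push_cast
    linear_combination key2

lemma shift_invol (n : ℕ) (x : Fin (2 * n + 2) → ℂ) :
    (shiftM n).mulVec ((shiftM n).mulVec x) = x := by
  funext k
  rw [shift_mulVec, shift_mulVec]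
  exact congrArg x (Fin.eq_of_val_eq (sigN_sigN k.1))

/-- **Lemma (eigenvectors of `U` from eigenvectors of `J`).** Let `v` be a unit
eigenvector of `J` with eigenvalue `λ`, `a` its lift and `b = S a`.
(i) If `λ = ±1` then `U a = λ a`.
(ii) If `-1 < λ < 1` and `φ ∈ (0,π)` satisfies `cos φ = λ`, then for each sign `ε = ±1`,
`U(a - e^{iεφ} b) = e^{iεφ}(a - e^{iεφ} b)` and `‖a - e^{iεφ} b‖² = 2(1 - λ²)`. -/
theorem walkM_eigenvectors_from_jacobi (n : ℕ) (hn : 1 ≤ n)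
    (p q : ℝ) (hp0 : 0 < p) (hp1 : p < 1) (hq0 : 0 < q) (hq1 : q < 1) (hpq : p + q = 1)
    (lam : ℝ) (v : Fin (n + 2) → ℝ)
    (hv : ∑ j : Fin (n + 2), (v j) ^ 2 = 1)
    (heig : (jacobiM p q n).mulVec v = lam • v) :
    ((lam = 1 ∨ lam = -1) →
      (walkM p q n).mulVec (liftVec p q n v) = ((lam : ℝ) : ℂ) • liftVec p q n v) ∧
    (-1 < lam → lam < 1 → ∀ φ : ℝ, φ ∈ Set.Ioo 0 Real.pi → Real.cos φ = lam →
      ∀ ε : ℝ, ε = 1 ∨ ε = -1 →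
        (walkM p q n).mulVec
            (liftVec p q n v -
              Complex.exp (((ε * φ : ℝ) : ℂ) * Complex.I) •
                (shiftM n).mulVec (liftVec p q n v)) =
          Complex.exp (((ε * φ : ℝ) : ℂ) * Complex.I) •
            (liftVec p q n v -
              Complex.exp (((ε * φ : ℝ) : ℂ) * Complex.I) •
                (shiftM n).mulVec (liftVec p q n v)) ∧
        ∑ k : Fin (2 * n + 2),
            Norm.norm
              ((liftVec p q n v -
                Complex.exp (((ε * φ : ℝ) : ℂ) * Complex.I) •
                  (shiftM n).mulVec (liftVec p q n v)) k) ^ 2 =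
          2 * (1 - lam ^ 2)) := by
  have hvr : ∑ j ∈ Finset.range (n + 2), (v (fidx n j)) ^ 2 = 1 := by
    rw [← hv, ← Fin.sum_univ_eq_sum_range (fun j => (v (fidx n j)) ^ 2) (n + 2)]
    exact Finset.sum_congr rfl (fun i _ => by rw [fidx_eq n i.1 i.isLt])
  have hpair : ∀ g : ℕ → ℝ, ∑ k ∈ Finset.range (2 * n + 2), g k
      = ∑ j ∈ Finset.range (n + 1), (g (2 * j) + g (2 * j + 1)) := by
    intro g; rw [show 2 * n + 2 = 2 * (n + 1) from by ring, sum_range_two_mul]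
  have hSa : ∑ k ∈ Finset.range (2 * n + 2), (aRN p q n v k) ^ 2 = 1 := by
    rw [sum_aRN_sq p q hp0.le hq0.le hpq n hn v, hvr]
  have hSb : ∑ k ∈ Finset.range (2 * n + 2), (aRN p q n v (sigN k)) ^ 2 = 1 := by
    rw [hpair (fun k => (aRN p q n v (sigN k)) ^ 2), ← hSa,
      hpair (fun k => (aRN p q n v k) ^ 2)]
    exact Finset.sum_congr rfl (fun j _ => by rw [sigN_even, sigN_odd]; ring)
  have hSab : ∑ k ∈ Finset.range (2 * n + 2), aRN p q n v k * aRN p q n v (sigN k) = lam := by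
    rw [hpair (fun k => aRN p q n v k * aRN p q n v (sigN k))]
    have e : ∀ j ∈ Finset.range (n + 1),
        (aRN p q n v (2 * j) * aRN p q n v (sigN (2 * j))
          + aRN p q n v (2 * j + 1) * aRN p q n v (sigN (2 * j + 1)))
        = 2 * (Dc p q n j * (v (fidx n j) * v (fidx n (j + 1)))) := by
      intro j hj
      rw [sigN_even, sigN_odd,
        ← pair_prod p q hp0.le n hn v j (by rw [Finset.mem_range] at hj; omega)]
      ring
    rw [Finset.sum_congr rfl e, ← Finset.mul_sum]
    exact quad_eq_lam p q lam n v hvr heig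
  have hUa : (walkM p q n).mulVec (liftVec p q n v)
      = (shiftM n).mulVec (liftVec p q n v) := by
    show (shiftM n * coinM p q n).mulVec _ = _
    rw [← Matrix.mulVec_mulVec, coin_fix_vec p q hp0 hq0 hpq n hn v]
  have hUb : (walkM p q n).mulVec ((shiftM n).mulVec (liftVec p q n v))
      = ((2 * lam : ℝ) : ℂ) • ((shiftM n).mulVec (liftVec p q n v)) - liftVec p q n v := by
    show (shiftM n * coinM p q n).mulVec _ = _
    rw [← Matrix.mulVec_mulVec, coin_shift_vec p q lam hp0 hq0 hpq n hn v heig,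
      Matrix.mulVec_sub, Matrix.mulVec_smul, shift_invol]
  constructor
  · intro hl
    have hll : lam ^ 2 = 1 := by rcases hl with h | h <;> rw [h] <;> norm_num
    have hzero : ∑ k ∈ Finset.range (2 * n + 2),
        (aRN p q n v (sigN k) - lam * aRN p q n v k) ^ 2 = 0 := by
      have expand : ∀ k ∈ Finset.range (2 * n + 2),
          (aRN p q n v (sigN k) - lam * aRN p q n v k) ^ 2
          = ((aRN p q n v (sigN k)) ^ 2 + lam ^ 2 * (aRN p q n v k) ^ 2)
            - 2 * lam * (aRN p q n v k * aRN p q n v (sigN k)) := fun k _ => by ring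
      rw [Finset.sum_congr rfl expand, Finset.sum_sub_distrib, Finset.sum_add_distrib,
        ← Finset.mul_sum, ← Finset.mul_sum, hSa, hSb, hSab]
      linear_combination (-1 : ℝ) * hll
    have hpt : ∀ k : Fin (2 * n + 2),
        aRN p q n v (sigN k.1) = lam * aRN p q n v k.1 := by
      intro k
      have h1 := (Finset.sum_eq_zero_iff_of_nonneg (fun i _ => sq_nonneg _)).mp hzero
        k.1 (Finset.mem_range.mpr k.isLt)
      have h2 := (pow_eq_zero_iff two_ne_zero).mp h1
      exact sub_eq_zero.mp h2
    rw [hUa]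
    funext k
    rw [shift_lift_apply]
    simp only [Pi.smul_apply, smul_eq_mul, liftVec_eq]
    exact_mod_cast hpt k
  · intro _ _ φ hφ hcos ε hε
    have hcosθ : Real.cos (ε * φ) = lam := by
      rcases hε with h | h <;> rw [h]
      · rw [one_mul, hcos]
      · rw [show (-1 : ℝ) * φ = -φ from by ring, Real.cos_neg, hcos]
    set μ := Complex.exp (((ε * φ : ℝ) : ℂ) * Complex.I) with hμ
    have hexp : μ * Complex.exp (-((ε * φ : ℝ) : ℂ) * Complex.I) = 1 := by
      rw [hμ, ← Complex.exp_add,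
        show ((ε * φ : ℝ) : ℂ) * Complex.I + -((ε * φ : ℝ) : ℂ) * Complex.I = 0 from by ring,
        Complex.exp_zero]
    have hsum : μ + Complex.exp (-((ε * φ : ℝ) : ℂ) * Complex.I) = 2 * ((lam : ℝ) : ℂ) := by
      have hc : Complex.cos ((ε * φ : ℝ) : ℂ)
          = (Complex.exp (((ε * φ : ℝ) : ℂ) * Complex.I)
            + Complex.exp (-((ε * φ : ℝ) : ℂ) * Complex.I)) / 2 := rfl
      have hc2 : Complex.cos ((ε * φ : ℝ) : ℂ) = ((lam : ℝ) : ℂ) := by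
        rw [← Complex.ofReal_cos, hcosθ]
      rw [hμ]
      linear_combination (-2 : ℂ) * hc + 2 * hc2
    have hquad : μ ^ 2 - 2 * ((lam : ℝ) : ℂ) * μ + 1 = 0 := by
      linear_combination μ * hsum - hexp
    constructor
    · rw [Matrix.mulVec_sub, Matrix.mulVec_smul, hUa, hUb]
      funext k
      simp only [Pi.sub_apply, Pi.smul_apply, smul_eq_mul]
      push_cast
      linear_combination ((shiftM n).mulVec (liftVec p q n v) k) * hquad
    · have habs : ∀ k : Fin (2 * n + 2),
          Norm.norm ((liftVec p q n v - μ • (shiftM n).mulVec (liftVec p q n v)) k) ^ 2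
          = (aRN p q n v k.1) ^ 2 + (aRN p q n v (sigN k.1)) ^ 2
            - 2 * Real.cos (ε * φ) * (aRN p q n v k.1 * aRN p q n v (sigN k.1)) := by
        intro k
        rw [Pi.sub_apply, Pi.smul_apply, smul_eq_mul, liftVec_eq, shift_lift_apply]
        rw [Complex.sq_norm, hμ, Complex.exp_mul_I, ← Complex.ofReal_cos, ← Complex.ofReal_sin]
        simp only [Complex.normSq_apply, Complex.sub_re, Complex.sub_im, Complex.mul_re,
          Complex.mul_im, Complex.add_re, Complex.add_im, Complex.ofReal_re, Complex.ofReal_im,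
          Complex.I_re, Complex.I_im]
        ring_nf
        nlinarith [Real.sin_sq_add_cos_sq (ε * φ),
          sq_nonneg (aRN p q n v (sigN k.1)), sq_nonneg (aRN p q n v k.1)]
      rw [Finset.sum_congr rfl (fun k _ => habs k),
        Fin.sum_univ_eq_sum_range (fun m => (aRN p q n v m) ^ 2 + (aRN p q n v (sigN m)) ^ 2
          - 2 * Real.cos (ε * φ) * (aRN p q n v m * aRN p q n v (sigN m))) (2 * n + 2),
        Finset.sum_sub_distrib, Finset.sum_add_distrib, ← Finset.mul_sum, hSa, hSb, hSab, hcosθ]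
      ring
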